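/- Induction step of the construction: suppose [v] ∩ 𝒞_{k+1}^{p_1} ∩ … ∩ 𝒞_{k+i}^{p_i} ∩ 𝒞_{k+i+1} ⊆ U_{k+i+2}, where U_{k+i+2} is open in ℕ^ℕ and the left-hand side is a finite set of functions. Then there exists p (and hence p_{i+1} > p_i) such that [v] ∩ 𝒞_{k+1}^{p_1} ∩ … ∩ 𝒞_{k+i}^{p_i} ∩ 𝒞_{k+i+1}^{p} ⊆ U_{k+i+2}. -/

import Mathlib

/-- `f` extends the finite sequence `v`. -/
def Extends (f : ℕ → ℕ) (v : List ℕ) : Prop := ∀ j, ∀ _h : j < v.length, f j = v.getD j 0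

/-- prefix `f↾n = (f 0, …, f (n-1))`. -/
def pref (f : ℕ → ℕ) (n : ℕ) : List ℕ := (List.range n).map f

/-- `K_𝒞` of a finite sequence, where `𝒞 = {F i : i ∈ ℕ}`. -/
noncomputable def KCv (F : ℕ → ℕ → ℕ) (v : List ℕ) : ℕ∞ :=
  sInf ((fun i : ℕ => (i : ℕ∞)) '' {i | Extends (F i) v})

/-- `K_𝒞` of a function. -/
noncomputable def KCf (F : ℕ → ℕ → ℕ) (f : ℕ → ℕ) : ℕ∞ :=
  sInf ((fun i : ℕ => (i : ℕ∞)) '' {i | F i = f})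


lemma pref_getD (g : ℕ → ℕ) (q j : ℕ) (h : j < q) : (pref g q).getD j 0 = g j := by
  unfold pref
  rw [List.getD_eq_getElem _ _ (by simpa using h)]
  simp

lemma extends_pref_iff (f g : ℕ → ℕ) (q : ℕ) :
    Extends f (pref g q) ↔ ∀ j < q, f j = g j := by
  unfold Extends
  constructor
  · intro h j hj
    rw [h j (by simpa [pref] using hj), pref_getD g q j hj]
  · intro h j hj
    have hj' : j < q := by simpa [pref] using hj
    rw [pref_getD g q j hj']
    exact h j hj'

lemma pref_congr (f g : ℕ → ℕ) (n : ℕ) (h : ∀ j < n, f j = g j) :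
    pref f n = pref g n := by
  unfold pref
  apply List.map_congr_left
  intro x hx
  exact h x (List.mem_range.mp hx)

lemma KCv_le_iff (F : ℕ → ℕ → ℕ) (v : List ℕ) (n : ℕ) :
    KCv F v ≤ (n : ℕ∞) ↔ ∃ m ≤ n, Extends (F m) v := by
  constructor
  · intro h
    by_contra hc
    push_neg at hc
    have h2 : ((n + 1 : ℕ) : ℕ∞) ≤ KCv F v := by
      apply le_sInf
      rintro b ⟨m, hm, rfl⟩
      show ((n+1:ℕ) : ℕ∞) ≤ (m : ℕ∞)
      exact_mod_cast Nat.succ_le_of_lt (lt_of_not_ge fun hle => hc m hle hm)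
    have : ((n+1 : ℕ) : ℕ∞) ≤ (n : ℕ∞) := le_trans h2 h
    have := (Nat.cast_le (α := ℕ∞)).mp this
    omega
  · rintro ⟨m, hm, hext⟩
    refine le_trans (sInf_le ⟨m, hext, rfl⟩) ?_
    show (m : ℕ∞) ≤ (n : ℕ∞)
    exact_mod_cast hm

lemma cylinder_nhd (U : Set (ℕ → ℕ)) (hU : IsOpen U) (f : ℕ → ℕ) (hf : f ∈ U) :
    ∃ N, ∀ g : ℕ → ℕ, (∀ j < N, g j = f j) → g ∈ U := by
  obtain ⟨I, u, hu, hsub⟩ := isOpen_pi_iff.mp hU f hf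
  refine ⟨I.sup id + 1, fun g hg => hsub ?_⟩
  intro j hj
  rw [Finset.mem_coe] at hj
  have hjN : j < I.sup id + 1 := Nat.lt_succ_of_le (Finset.le_sup (f := id) hj)
  rw [hg j hjN]
  exact (hu j hj).2


/-- induction step — replacing `𝒞_{k+i+1}` by `𝒞_{k+i+1}^{p}` for
some `p > p_i` preserves the inclusion into the open set `U`. -/
theorem stmt18 (F : ℕ → ℕ → ℕ) (U : Set (ℕ → ℕ)) (hU : IsOpen U)
    (k i : ℕ) (v : List ℕ) (p : ℕ → ℕ)
    (hyp : {g | Extends g v} ∩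
        (⋂ j ∈ Finset.Icc 1 i, {g | KCv F (pref g (p j)) ≤ ((k + j : ℕ) : ℕ∞)}) ∩
        {g | ∃ m ≤ k + i + 1, F m = g} ⊆ U) :
    ∃ q, q > p i ∧
      {g | Extends g v} ∩
        (⋂ j ∈ Finset.Icc 1 i, {g | KCv F (pref g (p j)) ≤ ((k + j : ℕ) : ℕ∞)}) ∩
        {g | KCv F (pref g q) ≤ ((k + i + 1 : ℕ) : ℕ∞)} ⊆ U := by
  classical
  -- a cylinder bound for each F m that lies in U
  have hN : ∀ m : ℕ, ∃ N, F m ∈ U → ∀ g : ℕ → ℕ, (∀ j < N, g j = F m j) → g ∈ U := by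
    intro m
    by_cases h : F m ∈ U
    · obtain ⟨N, hN⟩ := cylinder_nhd U hU (F m) h
      exact ⟨N, fun _ => hN⟩
    · exact ⟨0, fun hm => absurd hm h⟩
  choose N hNspec using hN
  set q : ℕ := (p i + 1) ⊔ v.length ⊔ ((Finset.Icc 1 i).sup p) ⊔
      ((Finset.range (k + i + 2)).sup N) with hq
  refine ⟨q, by omega, ?_⟩
  rintro g ⟨⟨hgv, hgI⟩, hgq⟩
  rw [Set.mem_setOf_eq, KCv_le_iff] at hgq
  obtain ⟨m, hm, hext⟩ := hgq
  rw [extends_pref_iff] at hext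
  -- F m satisfies the hypothesis constraints
  have hFmU : F m ∈ U := by
    apply hyp
    refine ⟨⟨?_, ?_⟩, m, hm, rfl⟩
    · intro j hj
      have hjq : j < q := lt_of_lt_of_le hj (by omega)
      rw [Set.mem_setOf_eq] at hgv
      rw [hext j hjq]
      exact hgv j hj
    · simp only [Set.mem_iInter] at hgI ⊢
      intro j hj
      have hpj : p j ≤ q := le_trans (Finset.le_sup hj) (by omega)
      have : pref (F m) (p j) = pref g (p j) :=
        pref_congr _ _ _ (fun x hx => hext x (lt_of_lt_of_le hx hpj))
      rw [Set.mem_setOf_eq, this]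
      exact hgI j hj
  -- g agrees with F m on a long enough prefix, hence g ∈ U
  apply hNspec m hFmU
  intro j hj
  have h1 : N m ≤ (Finset.range (k + i + 2)).sup N :=
    Finset.le_sup (Finset.mem_range.mpr (by omega))
  have hNm : N m ≤ q := le_trans h1 (by omega)
  exact (hext j (lt_of_lt_of_le hj hNm)).symm
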